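/- Let M₂ be the commutative monoid generated by the four words {00, 01, 10, 11} of length 2 over {0,1}, with defining relations a0 + a1 = 0a + 1a for each a ∈ {0,1} (that is, 00 + 01 = 00 + 10 and 10 + 11 = 01 + 11). Then M₂ is not cancellative: 00 + 01 = 00 + 10 but 01 ≠ 10 in M₂. -/

import Mathlib

/-- The defining congruence of the monoid `M₂`: the free commutative monoid on the
four words of length 2 over `{0,1}` (a word `ab` is the pair `(a, b)` of Booleans,
`0 = false`, `1 = true`), modulo `00 + 01 = 00 + 10` and `10 + 11 = 01 + 11`. -/
noncomputable def M2con : AddCon ((Bool × Bool) →₀ ℕ) :=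
  addConGen fun x y =>
    (x = Finsupp.single (false, false) 1 + Finsupp.single (false, true) 1 ∧
      y = Finsupp.single (false, false) 1 + Finsupp.single (true, false) 1) ∨
    (x = Finsupp.single (true, false) 1 + Finsupp.single (true, true) 1 ∧
      y = Finsupp.single (false, true) 1 + Finsupp.single (true, true) 1)

/-- An explicit congruence containing the generators, which separates `01` from `10`. -/
def Scon : AddCon ((Bool × Bool) →₀ ℕ) where
  r x y := x = y ∨
    (x (false, false) = y (false, false) ∧ x (true, true) = y (true, true) ∧
      x (false, true) + x (true, false) = y (false, true) + y (true, false) ∧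
      1 ≤ x (false, false) + x (true, true))
  iseqv := by
    constructor
    · intro x; exact Or.inl rfl
    · rintro x y (rfl | ⟨h1, h2, h3, h4⟩)
      · exact Or.inl rfl
      · exact Or.inr ⟨h1.symm, h2.symm, h3.symm, h1 ▸ h2 ▸ h4⟩
    · rintro x y z (rfl | ⟨h1, h2, h3, h4⟩) h
      · exact h
      · rcases h with rfl | ⟨g1, g2, g3, g4⟩
        · exact Or.inr ⟨h1, h2, h3, h4⟩
        · exact Or.inr ⟨h1.trans g1, h2.trans g2, h3.trans g3, h4⟩
  add' := by
    rintro w x y z (rfl | ⟨h1, h2, h3, h4⟩) (rfl | ⟨g1, g2, g3, g4⟩)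
    · exact Or.inl rfl
    · refine Or.inr ?_
      simp only [Finsupp.add_apply]
      omega
    · refine Or.inr ?_
      simp only [Finsupp.add_apply]
      omega
    · refine Or.inr ?_
      simp only [Finsupp.add_apply]
      omega

lemma M2_le_S : M2con ≤ Scon := by
  apply AddCon.addConGen_le.mpr
  rintro x y (⟨rfl, rfl⟩ | ⟨rfl, rfl⟩) <;>
  · refine Or.inr ?_
    simp [Finsupp.single_apply]

lemma key : M2con.mk' (Finsupp.single (false, true) 1) ≠ M2con.mk' (Finsupp.single (true, false) 1) := by
  intro h
  have h2 : M2con (Finsupp.single (false, true) 1) (Finsupp.single (true, false) 1) :=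
    M2con.eq.mp h
  have h3 := M2_le_S h2
  rcases h3 with h | ⟨_, _, _, h4⟩
  · have := DFunLike.congr_fun h (false, true)
    simp [Finsupp.single_apply] at this
  · simp [Finsupp.single_apply] at h4

/-- `M₂` is not cancellative: `00 + 01 = 00 + 10` in `M₂` but `01 ≠ 10`. -/
theorem stmt_17 :
    (M2con.mk' (Finsupp.single (false, false) 1) + M2con.mk' (Finsupp.single (false, true) 1) =
      M2con.mk' (Finsupp.single (false, false) 1) + M2con.mk' (Finsupp.single (true, false) 1)) ∧
    M2con.mk' (Finsupp.single (false, true) 1) ≠ M2con.mk' (Finsupp.single (true, false) 1) ∧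
    ¬ (∀ x y z : M2con.Quotient, x + z = y + z → x = y) := by
  have heq : (M2con.mk' (Finsupp.single (false, false) 1) + M2con.mk' (Finsupp.single (false, true) 1) =
      M2con.mk' (Finsupp.single (false, false) 1) + M2con.mk' (Finsupp.single (true, false) 1)) := by
    rw [← map_add, ← map_add]
    exact M2con.eq.mpr (AddConGen.Rel.of _ _ (Or.inl ⟨rfl, rfl⟩))
  refine ⟨heq, key, fun h => key (h _ _ (M2con.mk' (Finsupp.single (false, false) 1)) ?_)⟩
  rw [add_comm, add_comm (M2con.mk' (Finsupp.single (true, false) 1))]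
  exact heq
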